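/- For every integer k ≥ 0, the polynomial Ĥe_k has exactly k real roots, all of them simple (i.e. Ĥe_k has k distinct real zeros and its degree is k). -/

import Mathlib

open Polynomial Filter

noncomputable def Hhat : ℕ → Polynomial ℝ
  | 0 => 1
  | 1 => Polynomial.X
  | (n + 2) => Polynomial.X * Hhat (n + 1) - Polynomial.C ((n : ℝ) + 3) * Hhat n

lemma hhat_rec (n : ℕ) :
    Hhat (n+2) = X * Hhat (n+1) - C ((n:ℝ)+3) * Hhat n := rfl

lemma exists_root_Ioo (p : Polynomial ℝ) {a b : ℝ} (hab : a < b)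
    (h : p.eval a * p.eval b < 0) : ∃ c ∈ Set.Ioo a b, p.eval c = 0 := by
  have hc : ContinuousOn (fun x => p.eval x) (Set.Icc a b) :=
    (p.continuous_aeval).continuousOn
  rcases lt_trichotomy (p.eval a) 0 with ha | ha | ha
  · have hb : 0 < p.eval b := by nlinarith
    obtain ⟨c, hc1, hc2⟩ := intermediate_value_Ioo hab.le hc
      (show (0:ℝ) ∈ Set.Ioo (p.eval a) (p.eval b) from ⟨ha, hb⟩)
    exact ⟨c, hc1, hc2⟩
  · simp [ha] at h
  · have hb : p.eval b < 0 := by nlinarith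
    obtain ⟨c, hc1, hc2⟩ := intermediate_value_Ioo' hab.le hc
      (show (0:ℝ) ∈ Set.Ioo (p.eval b) (p.eval a) from ⟨hb, ha⟩)
    exact ⟨c, hc1, hc2⟩

lemma exists_gt_eval_pos (p : Polynomial ℝ) (hdeg : 0 < p.degree)
    (h : 0 ≤ p.leadingCoeff) (a : ℝ) : ∃ b, a < b ∧ 0 < p.eval b := by
  have ht := p.tendsto_atTop_of_leadingCoeff_nonneg hdeg h
  obtain ⟨b, hb1, hb2⟩ := ((ht.eventually_gt_atTop 0).and (eventually_gt_atTop a)).exists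
  exact ⟨b, hb2, hb1⟩

lemma prod_neg_fun {k : ℕ} (f : Fin k → ℝ) :
    ∏ j, (-(f j)) = (-1:ℝ)^k * ∏ j, f j := by
  have : ∀ j : Fin k, -(f j) = (-1) * f j := fun j => by ring
  rw [Finset.prod_congr rfl fun j _ => this j, Finset.prod_mul_distrib,
    Finset.prod_const]
  simp

lemma prod_fin_eq_multiset {n : ℕ} (z : Fin n → ℝ) :
    ∏ i, (X - C (z i)) = ((Finset.univ.val.map z).map fun a => X - C a).prod := by
  rw [Multiset.map_map]; rfl

lemma prod_monic {n : ℕ} (z : Fin n → ℝ) : (∏ i, (X - C (z i))).Monic :=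
  monic_prod_of_monic _ _ fun i _ => monic_X_sub_C _

lemma prod_natDegree {n : ℕ} (z : Fin n → ℝ) : (∏ i, (X - C (z i))).natDegree = n := by
  rw [prod_fin_eq_multiset, Polynomial.natDegree_multiset_prod_X_sub_C_eq_card]
  simp

lemma eq_prod_of_roots {n : ℕ} (p : Polynomial ℝ) (hm : p.Monic) (hdeg : p.natDegree = n)
    (z : Fin n → ℝ) (hz : Function.Injective z) (hroot : ∀ i, p.eval (z i) = 0) :
    p = ∏ i, (X - C (z i)) := by
  have hp0 : p ≠ 0 := hm.ne_zero
  set M : Multiset ℝ := Finset.univ.val.map z with hM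
  have hnd : M.Nodup := Finset.univ.nodup.map hz
  have hsub : M ⊆ p.roots := by
    intro a ha
    rw [hM, Multiset.mem_map] at ha
    obtain ⟨i, _, rfl⟩ := ha
    rw [Polynomial.mem_roots hp0]
    exact hroot i
  have hle : M ≤ p.roots := (Multiset.le_iff_subset hnd).mpr hsub
  have hcardM : Multiset.card M = n := by simp [hM]
  have hcard : Multiset.card p.roots ≤ n := hdeg ▸ p.card_roots'
  have heq : M = p.roots := Multiset.eq_of_le_of_card_le hle (by omega)
  have := Polynomial.prod_multiset_X_sub_C_of_monic_of_roots_card_eq hm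
    (by rw [← heq, hcardM, hdeg])
  rw [prod_fin_eq_multiset, ← hM, heq, this]

lemma step_monic {k : ℕ} (Q R : Polynomial ℝ) (hQ : Q.Monic) (hQd : Q.natDegree = k+1)
    (hRd : R.natDegree ≤ k) (a : ℝ) :
    (X * Q - C a * R).Monic ∧ (X * Q - C a * R).natDegree = k + 2 := by
  have hA : (X * Q).Monic := monic_X.mul hQ
  have hAd : (X * Q).natDegree = k + 2 := by
    rw [monic_X.natDegree_mul hQ, natDegree_X, hQd]; omega
  have hAdeg : (X * Q).degree = ((k + 2 : ℕ) : WithBot ℕ) := by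
    rw [degree_eq_natDegree hA.ne_zero, hAd]
  have hBdeg : (C a * R).degree < (X * Q).degree := by
    apply lt_of_le_of_lt (degree_mul_le _ _)
    rw [hAdeg]
    have h2 : R.degree ≤ ((k : ℕ) : WithBot ℕ) :=
      degree_le_natDegree.trans (by exact_mod_cast hRd)
    calc (C a).degree + R.degree ≤ 0 + ((k : ℕ) : WithBot ℕ) :=
          add_le_add degree_C_le h2
      _ = ((k : ℕ) : WithBot ℕ) := zero_add _
      _ < ((k + 2 : ℕ) : WithBot ℕ) := Nat.cast_lt.mpr (by omega)
  constructor
  · have := hA.add_of_left (q := -(C a * R)) (by rwa [degree_neg])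
    simpa [sub_eq_add_neg] using this
  · have h1 : (X * Q - C a * R).degree = (X * Q).degree :=
      degree_sub_eq_left_of_degree_lt hBdeg
    exact natDegree_eq_of_degree_eq_some (h1.trans hAdeg)

lemma exists_lt_eval_sign (p : Polynomial ℝ) (hm : p.Monic) {n : ℕ} (hn : 0 < n)
    (hd : p.natDegree = n) (a0 : ℝ) :
    ∃ a, a < a0 ∧ 0 < (-1:ℝ)^n * p.eval a := by
  set q : Polynomial ℝ := C ((-1:ℝ)^n) * p.comp (-X) with hq
  have hXd : ((-X : Polynomial ℝ)).natDegree = 1 := by simp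
  have hcompd : (p.comp (-X)).natDegree = n := by
    rw [natDegree_comp, hXd, hd, mul_one]
  have hcomplc : (p.comp (-X)).leadingCoeff = (-1:ℝ)^n := by
    rw [leadingCoeff_comp (by rw [hXd]; omega)]
    simp [hm.leadingCoeff, hd]
  have hqlc : q.leadingCoeff = 1 := by
    rw [hq, leadingCoeff_mul, leadingCoeff_C, hcomplc, ← pow_add]
    exact Even.neg_one_pow ⟨n, by ring⟩
  have hq0 : q ≠ 0 := fun h => by simp [h] at hqlc
  have hqd : q.natDegree = n := by
    rw [hq, natDegree_mul (by simp) (by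
      intro h
      rw [hq, h, mul_zero] at hqlc
      simp at hqlc), natDegree_C, hcompd, zero_add]
  have hqdeg : 0 < q.degree := by
    rw [degree_eq_natDegree hq0, hqd]
    exact_mod_cast hn
  have ht := q.tendsto_atTop_of_leadingCoeff_nonneg hqdeg (by rw [hqlc]; norm_num)
  obtain ⟨t, ht1, ht2⟩ := ((ht.eventually_gt_atTop 0).and (eventually_gt_atTop (-a0))).exists
  refine ⟨-t, by linarith, ?_⟩
  have heq : q.eval t = (-1:ℝ)^n * p.eval (-t) := by
    rw [hq]; simp [eval_comp]
  rw [← heq]; exact ht1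

lemma glue {n : ℕ} (y : Fin (n+1) → ℝ) (p : Polynomial ℝ)
    {a b : ℝ} (c : Fin n → ℝ)
    (ha : a < y 0) (hpa : p.eval a = 0)
    (hb : y (Fin.last n) < b) (hpb : p.eval b = 0)
    (hc : ∀ i : Fin n, c i ∈ Set.Ioo (y i.castSucc) (y i.succ))
    (hpc : ∀ i : Fin n, p.eval (c i) = 0) :
    ∃ z : Fin (n+2) → ℝ, StrictMono z ∧ (∀ i, p.eval (z i) = 0) ∧
      ∀ i : Fin (n+1), z i.castSucc < y i ∧ y i < z i.succ := by
  set w : Fin (n+1) → ℝ := Fin.snoc c b with hw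
  have hint : ∀ i : Fin (n+1), (Fin.cons a w : Fin (n+2) → ℝ) i.castSucc < y i ∧
      y i < (Fin.cons a w : Fin (n+2) → ℝ) i.succ := by
    intro i
    constructor
    · induction i using Fin.cases with
      | zero => simpa using ha
      | succ j =>
        have h2 : (j.succ).castSucc = (j.castSucc).succ := by
          simp [Fin.ext_iff]
        rw [h2, Fin.cons_succ, hw, Fin.snoc_castSucc]
        exact (hc j).2
    · rw [Fin.cons_succ]
      induction i using Fin.lastCases with
      | last => simpa [hw] using hb
      | cast j => rw [hw, Fin.snoc_castSucc]; exact (hc j).1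
  refine ⟨Fin.cons a w, ?_, ?_, hint⟩
  · rw [Fin.strictMono_iff_lt_succ]
    intro i
    exact (hint i).1.trans (hint i).2
  · intro i
    induction i using Fin.cases with
    | zero => simpa using hpa
    | succ j =>
      rw [Fin.cons_succ]
      induction j using Fin.lastCases with
      | last => simpa [hw] using hpb
      | cast j => rw [hw, Fin.snoc_castSucc]; exact hpc j

/-- The induction invariant: roots of `Hhat k` and `Hhat (k+1)` interlace. -/
def HhatInv (k : ℕ) : Prop :=
  ∃ (x : Fin k → ℝ) (y : Fin (k+1) → ℝ),
    StrictMono x ∧ StrictMono y ∧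
    Hhat k = ∏ i, (X - C (x i)) ∧
    Hhat (k+1) = ∏ i, (X - C (y i)) ∧
    ∀ i : Fin k, y i.castSucc < x i ∧ x i < y i.succ

lemma hhatInv_zero : HhatInv 0 := by
  refine ⟨Fin.elim0, fun _ => 0, fun i => i.elim0, ?_, by simp [Hhat], ?_, fun i => i.elim0⟩
  · intro i j hij
    rw [Fin.lt_def] at hij; omega
  · show Hhat 1 = _
    simp [Hhat]

lemma hhatInv_step {k : ℕ} (h : HhatInv k) : HhatInv (k+1) := by
  obtain ⟨x, y, hx, hy, hfx, hfy, hint⟩ := h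
  set p := Hhat (k+2) with hp
  have hrec : p = X * Hhat (k+1) - C ((k:ℝ)+3) * Hhat k := rfl
  have hQm : (Hhat (k+1)).Monic := hfy ▸ prod_monic y
  have hQd : (Hhat (k+1)).natDegree = k+1 := hfy ▸ prod_natDegree y
  have hRd : (Hhat k).natDegree ≤ k := le_of_eq (hfx ▸ prod_natDegree x)
  have hstep := step_monic (Hhat (k+1)) (Hhat k) hQm hQd hRd ((k:ℝ)+3)
  rw [← hrec] at hstep
  obtain ⟨hpm, hpd⟩ := hstep
  have hc3 : (0:ℝ) < (k:ℝ)+3 := by positivity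
  have hevalk : ∀ t, (Hhat k).eval t = ∏ j, (t - x j) := by
    intro t; rw [hfx]; simp [eval_prod]
  have hevalk1 : ∀ i : Fin (k+1), (Hhat (k+1)).eval (y i) = 0 := by
    intro i; rw [hfy, eval_prod]
    exact Finset.prod_eq_zero (Finset.mem_univ i) (by simp)
  have hevp : ∀ i : Fin (k+1), p.eval (y i) = -(((k:ℝ)+3) * ∏ j, (y i - x j)) := by
    intro i
    rw [hrec, eval_sub, eval_mul, eval_mul, eval_X, eval_C, hevalk1 i, hevalk (y i)]
    ring
  have hxy1 : ∀ (i : Fin (k+1)) (j : Fin k), (j:ℕ) < (i:ℕ) → x j < y i := by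
    intro i j hij
    have h1 := (hint j).2
    have h2 : y j.succ ≤ y i := hy.monotone (by rw [Fin.le_def]; simp [Fin.val_succ]; omega)
    linarith
  have hxy2 : ∀ (i : Fin (k+1)) (j : Fin k), (i:ℕ) ≤ (j:ℕ) → y i < x j := by
    intro i j hij
    have h1 := (hint j).1
    have h2 : y i ≤ y j.castSucc := hy.monotone (by rw [Fin.le_def]; simpa using hij)
    linarith
  -- sign at the top root of Hhat (k+1)
  have htopneg : p.eval (y (Fin.last k)) < 0 := by
    rw [hevp]
    have hpos : 0 < ∏ j, (y (Fin.last k) - x j) := Finset.prod_pos (fun j _ => by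
      have := hxy1 (Fin.last k) j (by simp [Fin.val_last])
      linarith)
    nlinarith
  -- opposite signs at consecutive roots of Hhat (k+1)
  have hmidsign : ∀ i : Fin k, p.eval (y i.castSucc) * p.eval (y i.succ) < 0 := by
    intro i
    rw [hevp, hevp]
    have hg : ∀ j ∈ Finset.univ.erase i,
        0 < (y i.castSucc - x j) * (y i.succ - x j) := by
      intro j hj
      have hne : (j:ℕ) ≠ (i:ℕ) := fun h => (Finset.ne_of_mem_erase hj) (Fin.ext h)
      rcases lt_or_gt_of_ne hne with h | h
      · have h1 := hxy1 i.castSucc j (by simpa using h)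
        have h2 := hxy1 i.succ j (by simp [Fin.val_succ]; omega)
        nlinarith
      · have h1 := hxy2 i.castSucc j (by simp; omega)
        have h2 := hxy2 i.succ j (by simp [Fin.val_succ]; omega)
        nlinarith
    have hgi : (y i.castSucc - x i) * (y i.succ - x i) < 0 := by
      have h1 := hxy2 i.castSucc i (by simp)
      have h2 := hxy1 i.succ i (by simp [Fin.val_succ])
      nlinarith
    have hprodneg : (∏ j, (y i.castSucc - x j) * (y i.succ - x j)) < 0 := by
      rw [← Finset.mul_prod_erase _ _ (Finset.mem_univ i)]
      exact mul_neg_of_neg_of_pos hgi (Finset.prod_pos hg)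
    have hsplit : (∏ j, (y i.castSucc - x j)) * (∏ j, (y i.succ - x j)) =
        ∏ j, (y i.castSucc - x j) * (y i.succ - x j) := Finset.prod_mul_distrib.symm
    have hkey : -(((k:ℝ)+3) * ∏ j, (y i.castSucc - x j)) *
        -(((k:ℝ)+3) * ∏ j, (y i.succ - x j)) =
        (((k:ℝ)+3) * ((k:ℝ)+3)) * ∏ j, (y i.castSucc - x j) * (y i.succ - x j) := by
      rw [← hsplit]; ring
    rw [hkey]
    exact mul_neg_of_pos_of_neg (mul_pos hc3 hc3) hprodneg
  -- the bottom root
  obtain ⟨a, haly, hasign⟩ := exists_lt_eval_sign p hpm (show 0 < k+2 by omega) hpd (y 0)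
  set s : ℝ := (-1:ℝ)^k with hsdef
  have hs : s * s = 1 := by rw [hsdef, ← pow_add]; exact Even.neg_one_pow ⟨k, by ring⟩
  have hpow : (-1:ℝ)^(k+2) = s := by rw [hsdef, pow_add]; norm_num
  rw [hpow] at hasign
  have hP0 : 0 < ∏ j, (x j - y 0) := Finset.prod_pos fun j _ => by
    have := hxy2 0 j (by simp); linarith
  have h0' : p.eval (y 0) = -(((k:ℝ)+3) * (s * ∏ j, (x j - y 0))) := by
    rw [hevp 0]
    congr 1
    congr 1
    rw [hsdef, ← prod_neg_fun]
    exact Finset.prod_congr rfl fun j _ => by ring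
  have hbotprod : p.eval a * p.eval (y 0) < 0 := by
    have hE : p.eval a = s * (s * p.eval a) := by rw [← mul_assoc, hs, one_mul]
    rw [h0', hE]
    have hkey : s * (s * p.eval a) * -(((k:ℝ)+3) * (s * ∏ j, (x j - y 0))) =
        -((((k:ℝ)+3) * (s * p.eval a) * ∏ j, (x j - y 0)) * (s * s)) := by ring
    rw [hkey, hs, mul_one]
    have : 0 < ((k:ℝ)+3) * (s * p.eval a) * ∏ j, (x j - y 0) :=
      mul_pos (mul_pos hc3 hasign) hP0
    linarith
  obtain ⟨ra, hra, hra0⟩ := exists_root_Ioo p haly hbotprod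
  -- the top root
  obtain ⟨b, hbl, hbpos⟩ := exists_gt_eval_pos p
    (by rw [degree_eq_natDegree hpm.ne_zero, hpd]; exact_mod_cast (by omega : 0 < k+2))
    (by rw [hpm.leadingCoeff]; norm_num) (y (Fin.last k))
  obtain ⟨rb, hrb, hrb0⟩ := exists_root_Ioo p hbl (mul_neg_of_neg_of_pos htopneg hbpos)
  -- the middle roots
  have hmid : ∀ i : Fin k, ∃ c ∈ Set.Ioo (y i.castSucc) (y i.succ), p.eval c = 0 :=
    fun i => exists_root_Ioo p (hy (Fin.castSucc_lt_succ (i := i))) (hmidsign i)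
  choose cm hcm hcm0 using hmid
  obtain ⟨z, hzmono, hzroot, hzint⟩ := glue y p cm hra.2 hra0 hrb.1 hrb0 hcm hcm0
  refine ⟨y, z, hy, hzmono, hfy, ?_, hzint⟩
  exact hp ▸ eq_prod_of_roots p hpm hpd z hzmono.injective hzroot

lemma hhatInv_all (k : ℕ) : HhatInv k := by
  induction k with
  | zero => exact hhatInv_zero
  | succ n ih => exact hhatInv_step ih

/-- Ĥe_k has degree k and exactly k real roots, all simple: its multiset of
    real roots has cardinality k and no duplicates. -/
theorem hhat_real_simple_roots (k : ℕ) :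
    (Hhat k).natDegree = k ∧
    Multiset.card (Hhat k).roots = k ∧
    (Hhat k).roots.Nodup := by
  obtain ⟨x, y, hx, hy, hfx, hfy, hint⟩ := hhatInv_all k
  rw [hfx, prod_fin_eq_multiset, Polynomial.natDegree_multiset_prod_X_sub_C_eq_card,
    Polynomial.roots_multiset_prod_X_sub_C]
  exact ⟨by simp, by simp, Finset.univ.nodup.map hx.injective⟩
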